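/- In the lattice $N$ of the previous context (with $H^2=2abc^2$, $\gcd$ conventions as stated), suppose $h_1=\frac{rH+s\delta}{2abc^2}\in N$ satisfies $h_1^2=\pm 2bc$ and $H\cdot h_1\equiv 0\pmod{bc}$. Then $bc\mid r$ and $bc\mid s$, and writing $r=pbc$, $s=qbc$, the integers $p,q$ satisfy $p\equiv\mu q\pmod{2ac}$ and $p^2-dq^2=\pm 4ac$. -/
import Mathlib


/-- If `h₁ = (rH + sδ)/(2abc²) ∈ N` (i.e. `r ≡ μs (mod 2abc²)`) satisfies
`h₁² = ±2bc` (i.e. `r² - ds² = ±2bc·2abc²`) and `H·h₁ = r ≡ 0 (mod bc)`, then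
`bc ∣ r`, `bc ∣ s`, and `p = r/bc`, `q = s/bc` satisfy `p ≡ μq (mod 2ac)` and
`p² - dq² = ±4ac`. -/
theorem stmt11 (a b c : ℕ) (ha : 1 ≤ a) (hb : 1 ≤ b) (hc : 1 ≤ c) (d μ : ℤ)
    (hμ : IsCoprime μ (2 * a * b * c ^ 2 : ℤ))
    (hcong : (4 * a * b * c ^ 2 : ℤ) ∣ (μ ^ 2 - d))
    (r s ε : ℤ) (hε : ε = 1 ∨ ε = -1)
    (hmem : (2 * a * b * c ^ 2 : ℤ) ∣ (r - μ * s))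
    (hsq : r ^ 2 - d * s ^ 2 = ε * (2 * b * c) * (2 * a * b * c ^ 2))
    (hHh₁ : (b * c : ℤ) ∣ r) :
    (b * c : ℤ) ∣ r ∧ (b * c : ℤ) ∣ s ∧
    (2 * a * c : ℤ) ∣ (r / (b * c) - μ * (s / (b * c))) ∧
    (r / (b * c)) ^ 2 - d * (s / (b * c)) ^ 2 = ε * (4 * a * c) := by
  have hB : (b * c : ℤ) ≠ 0 := by positivity
  have hBd : (b * c : ℤ) ∣ (2 * a * b * c ^ 2 : ℤ) := ⟨2 * a * c, by ring⟩
  have hcop : IsCoprime μ (b * c : ℤ) := hμ.of_isCoprime_of_dvd_right hBd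
  have hμs : (b * c : ℤ) ∣ μ * s := by
    have h1 : (b * c : ℤ) ∣ (r - μ * s) := hBd.trans hmem
    have := dvd_sub hHh₁ h1
    simpa using this
  have hs : (b * c : ℤ) ∣ s := hcop.symm.dvd_of_dvd_mul_left hμs
  obtain ⟨p, hp⟩ := id hHh₁
  obtain ⟨q, hq⟩ := id hs
  have hpd : r / (b * c) = p := by rw [hp]; exact Int.mul_ediv_cancel_left _ hB
  have hqd : s / (b * c) = q := by rw [hq]; exact Int.mul_ediv_cancel_left _ hB
  refine ⟨hHh₁, hs, ?_, ?_⟩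
  · rw [hpd, hqd]
    obtain ⟨k, hk⟩ := hmem
    refine ⟨k, ?_⟩
    have : (b * c : ℤ) * (p - μ * q) = (b * c) * (2 * a * c * k) := by
      rw [show (b*c:ℤ) * (2*a*c*k) = (2*a*b*c^2) * k by ring, ← hk, hp, hq]; ring
    exact mul_left_cancel₀ hB this
  · rw [hpd, hqd]
    have h2 : (b * c : ℤ)^2 * (p ^ 2 - d * q ^ 2) = (b*c)^2 * (ε * (4 * a * c)) := by
      have : ((b*c)*p) ^ 2 - d * ((b*c)*q) ^ 2 = ε * (2 * b * c) * (2 * a * b * c ^ 2) := by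
        rw [← hp, ← hq]; exact hsq
      nlinarith [this]
    exact mul_left_cancel₀ (pow_ne_zero 2 hB) h2
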